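/- Let p ∈ K[X] with p(0) = 1 − k for a positive integer k, and let p̄ := p + 2k = p − 2p(0) + 2 (a constant shift of p). Then the K-linear map φ : K[X] → K[X], φ(f) = X^k·f, intertwines the V(p̄)-action with the V(p)-action: φ∘E_{p̄} = E_p∘φ, φ∘H_{p̄} = H_p∘φ, and φ∘Y_{p̄} = Y_p∘φ. Hence the submodule X^k·K[X] of V(p) is isomorphic to V(p − 2p(0) + 2) as an sl₂(K)-module. -/
import Mathlib


open Polynomial

/-- If `p(0) = 1 - k` with `k` a positive integer, and
`p̄ = p + 2k = p - 2p(0) + 2`, then `φ(f) = X^k f` intertwines the `V(p̄)`-action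
with the `V(p)`-action, so the submodule `X^k K[X] ⊆ V(p)` is isomorphic to
`V(p - 2p(0) + 2)`. -/
theorem stmt5 (K : Type*) [Field K] [IsAlgClosed K] [CharZero K]
    (p pbar q qbar : K[X])
    (hq : 2 * q + 2 * X * derivative q + p * derivative p
        + X * derivative (derivative p) = 0)
    (hqbar : 2 * qbar + 2 * X * derivative qbar + pbar * derivative pbar
        + X * derivative (derivative pbar) = 0)
    (k : ℕ) (hk : 0 < k) (hp0 : p.coeff 0 = 1 - (k : K))
    (hpbar : pbar = p + C (2 * (k : K))) :
    (∀ f : K[X], X ^ k * (X * f) = X * (X ^ k * f)) ∧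
    (∀ f : K[X], X ^ k * (pbar * f + 2 * X * derivative f)
        = p * (X ^ k * f) + 2 * X * derivative (X ^ k * f)) ∧
    (∀ f : K[X],
      X ^ k * (qbar * f - pbar * derivative f - X * derivative (derivative f))
        = q * (X ^ k * f) - p * derivative (X ^ k * f)
          - X * derivative (derivative (X ^ k * f))) := by
  have hC : C (2 * (k:K)) = 2 * C (k:K) := by
    rw [show (2*(k:K)) = (k:K)+(k:K) by ring, C_add]; ring
  rw [hC] at hpbar
  -- key relation: X * (qbar - q) + k * p = k * (1 - k)
  have hrel : X * (qbar - q) + C (k:K) * p = C ((k:K) * (1 - k)) := by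
    have hd2 : (2:K[X]) * derivative (X * (qbar - q) + C (k:K) * p) = 0 := by
      subst hpbar
      simp only [derivative_add, derivative_mul, derivative_X, derivative_C,
        derivative_sub, derivative_ofNat, zero_mul, mul_zero, add_zero, zero_add,
        one_mul] at hqbar ⊢
      linear_combination hqbar - hq
    have hd : derivative (X * (qbar - q) + C (k:K) * p) = 0 := by
      rcases mul_eq_zero.mp hd2 with h | h
      · exact absurd h two_ne_zero
      · exact h
    rw [eq_C_of_derivative_eq_zero hd]
    congr 1
    simp [mul_coeff_zero, hp0]
  obtain ⟨m, rfl⟩ : ∃ m, k = m + 1 := ⟨k - 1, (Nat.succ_pred_eq_of_pos hk).symm⟩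
  have hXm : C ((m:K)) * X ^ (m - 1) * X = C ((m:K)) * X ^ m := by
    cases m with
    | zero => simp
    | succ n => rw [Nat.add_sub_cancel, mul_assoc, ← pow_succ]
  have hc : C ((↑(m+1):K) * (1 - ↑(m+1))) = -(C ((↑(m+1):K)) * C ((m:K))) := by
    rw [← C_mul, ← C_neg]
    congr 1
    push_cast
    ring
  rw [hc] at hrel
  refine ⟨fun f => by ring, fun f => ?_, fun f => ?_⟩
  · simp only [derivative_mul, derivative_X_pow, Nat.add_sub_cancel, hpbar]
    ring
  · simp only [derivative_mul, derivative_X_pow, Nat.add_sub_cancel, derivative_add,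
      derivative_X, derivative_C, zero_mul, mul_zero, add_zero, zero_add, one_mul]
    linear_combination (X ^ m * f) * hrel + (-(X ^ (m+1) * derivative f)) * hpbar
      + (f * C ((↑(m+1):K))) * hXm
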